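/- Let c > 0 and let (aₖ)ₖ≥1 be positive reals with aₖ = 1 − 2/k + O(k^{−3/2}). Then there is a constant e^a > 0 such that ∏ₖ₌₁ⁿ aₖ = (e^a/n²)·(1 + O(n^{−1/2}·(log n)^δ)) for any δ > 1/2; in particular n²·∏ₖ₌₁ⁿ aₖ converges to a positive limit. -/

import Mathlib

open Filter

-- key telescoping inequality
private lemma key_sqrt (m : ℕ) (hm : 1 ≤ m) :
    1 / (((m:ℝ)+1) * Real.sqrt ((m:ℝ)+1)) ≤ 2 / Real.sqrt m - 2 / Real.sqrt ((m:ℝ)+1) := by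
  have hm' : (1:ℝ) ≤ (m:ℝ) := by exact_mod_cast hm
  set u := Real.sqrt m with hu'
  set v := Real.sqrt ((m:ℝ)+1) with hv'
  have hu : 0 < u := Real.sqrt_pos.mpr (by linarith)
  have hv : 0 < v := Real.sqrt_pos.mpr (by linarith)
  have huv : u ≤ v := Real.sqrt_le_sqrt (by linarith)
  have hu2 : u*u = (m:ℝ) := Real.mul_self_sqrt (by linarith)
  have hv2 : v*v = (m:ℝ)+1 := Real.mul_self_sqrt (by linarith)
  have hd : v*v - u*u = 1 := by rw [hu2, hv2]; ring
  have hrw : ((m:ℝ)+1) * v = v*v*v := by rw [hv2]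
  rw [hrw, div_sub_div _ _ hu.ne' hv.ne', div_le_div_iff₀ (by positivity) (by positivity)]
  nlinarith [mul_nonneg (sub_nonneg.mpr huv) hv.le, mul_pos hu hv, mul_pos (mul_pos hv hv) hv,
    mul_le_mul_of_nonneg_left huv hv.le, mul_nonneg (mul_nonneg (sub_nonneg.mpr huv) hv.le) hv.le]

private lemma log_bound {x : ℝ} (h : |x - 1| ≤ 1/2) : |Real.log x| ≤ 2 * |x - 1| := by
  have hx : (1:ℝ)/2 ≤ x := by have := abs_le.mp h; linarith [this.1]
  have hx0 : 0 < x := by linarith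
  have h1 : Real.log x ≤ x - 1 := Real.log_le_sub_one_of_pos hx0
  have h2 : Real.log x⁻¹ ≤ x⁻¹ - 1 := Real.log_le_sub_one_of_pos (by positivity)
  rw [Real.log_inv] at h2
  have h3 : 1 - x⁻¹ ≤ Real.log x := by linarith
  rw [abs_le]
  constructor
  · rcases le_total 1 x with hc | hc
    · have hinv : x⁻¹ ≤ 1 := by rw [inv_le_one_iff₀]; right; exact hc
      have : |x-1| = x - 1 := abs_of_nonneg (by linarith)
      rw [this]; linarith
    · have : |x-1| = 1 - x := by rw [abs_of_nonpos (by linarith : x - 1 ≤ 0)]; ring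
      rw [this]
      have hxi : x⁻¹ - 1 ≤ 2*(1-x) := by
        rw [sub_le_iff_le_add, inv_le_iff_one_le_mul₀ hx0]
        nlinarith
      linarith
  · calc Real.log x ≤ x - 1 := h1
      _ ≤ |x-1| := le_abs_self _
      _ ≤ 2*|x-1| := by nlinarith [abs_nonneg (x-1)]

private lemma rpow_32 (n : ℕ) (hn : 1 ≤ n) :
    (n:ℝ) ^ ((3:ℝ)/2) = (n:ℝ) * Real.sqrt n := by
  have h0 : (0:ℝ) < n := by exact_mod_cast hn
  rw [show (3:ℝ)/2 = 1 + 1/2 by norm_num, Real.rpow_add h0, Real.rpow_one,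
    Real.sqrt_eq_rpow]

private lemma ratio_bound (a : ℕ → ℝ) (C : ℝ) (hC : 0 < C)
    (hCa : ∀ k, 1 ≤ k → |a k - (1 - 2/(k:ℝ))| ≤ C / (k:ℝ)^((3:ℝ)/2))
    (ha_pos : ∀ k, 1 ≤ k → 0 < a k) (n : ℕ) (hn : 2 ≤ n) :
    |((n:ℝ)^2 * ∏ k ∈ Finset.Icc 1 n, a k) /
      (((n-1:ℕ):ℝ)^2 * ∏ k ∈ Finset.Icc 1 (n-1), a k) - 1|
      ≤ (4*C+4) / ((n:ℝ) * Real.sqrt n) := by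
  have hx2 : (2:ℝ) ≤ (n:ℝ) := by exact_mod_cast hn
  have hx0 : (0:ℝ) < n := by linarith
  have hcast : ((n-1:ℕ):ℝ) = (n:ℝ) - 1 := by
    have : (1:ℕ) ≤ n := by omega
    push_cast [this]; ring
  have hx1 : (0:ℝ) < (n:ℝ) - 1 := by linarith
  have hP : 0 < ∏ k ∈ Finset.Icc 1 (n-1), a k :=
    Finset.prod_pos (fun k hk => ha_pos k (Finset.mem_Icc.mp hk).1)
  have hprod : ∏ k ∈ Finset.Icc 1 n, a k = (∏ k ∈ Finset.Icc 1 (n-1), a k) * a n := by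
    have h1 : n = (n-1) + 1 := by omega
    rw [h1, Finset.prod_Icc_succ_top (by omega), ← h1]
  have hs : 0 < Real.sqrt n := Real.sqrt_pos.mpr hx0
  have hss : Real.sqrt n ≤ (n:ℝ) := Real.sqrt_le_iff.mpr ⟨hx0.le, by nlinarith⟩
  have hratio : ((n:ℝ)^2 * ∏ k ∈ Finset.Icc 1 n, a k) /
      (((n-1:ℕ):ℝ)^2 * ∏ k ∈ Finset.Icc 1 (n-1), a k) - 1
      = ((n:ℝ)^2/((n:ℝ)-1)^2) * (a n - (1 - 2/(n:ℝ))) - 1/((n:ℝ)-1)^2 := by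
    rw [hprod, hcast]
    field_simp
    ring
  rw [hratio]
  have hb1 : |((n:ℝ)^2/((n:ℝ)-1)^2) * (a n - (1 - 2/(n:ℝ)))| ≤ 4 * (C / ((n:ℝ)*Real.sqrt n)) := by
    rw [abs_mul]
    have hq : |(n:ℝ)^2/((n:ℝ)-1)^2| ≤ 4 := by
      rw [abs_of_pos (by positivity), div_le_iff₀ (by positivity)]
      nlinarith
    have ha' := hCa n (by omega)
    rw [rpow_32 n (by omega)] at ha'
    exact mul_le_mul hq ha' (abs_nonneg _) (by norm_num)
  have hb2 : 1/((n:ℝ)-1)^2 ≤ 4 / ((n:ℝ)*Real.sqrt n) := by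
    rw [div_le_div_iff₀ (by positivity) (by positivity)]
    nlinarith [sq_nonneg ((n:ℝ)-2), mul_le_mul_of_nonneg_left hss hx0.le]
  calc |((n:ℝ)^2/((n:ℝ)-1)^2) * (a n - (1 - 2/(n:ℝ))) - 1/((n:ℝ)-1)^2|
      ≤ |((n:ℝ)^2/((n:ℝ)-1)^2) * (a n - (1 - 2/(n:ℝ)))| + |1/((n:ℝ)-1)^2| := abs_sub _ _
    _ ≤ 4 * (C / ((n:ℝ)*Real.sqrt n)) + 1/((n:ℝ)-1)^2 := by
        have h' : |1/((n:ℝ)-1)^2| = 1/((n:ℝ)-1)^2 := abs_of_pos (by positivity)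
        rw [h']; exact add_le_add_left hb1 _
    _ ≤ 4 * (C / ((n:ℝ)*Real.sqrt n)) + 4 / ((n:ℝ)*Real.sqrt n) := add_le_add_right hb2 _
    _ = (4*C+4) / ((n:ℝ)*Real.sqrt n) := by ring

theorem stmt_17 (a : ℕ → ℝ) (ha_pos : ∀ k, 1 ≤ k → 0 < a k)
    (ha : ∃ C > 0, ∀ k, 1 ≤ k →
      |a k - (1 - 2 / (k : ℝ))| ≤ C / (k : ℝ) ^ ((3:ℝ)/2)) :
    ∃ L > 0,
      (∀ δ : ℝ, 1/2 < δ → ∃ C' > 0, ∀ n : ℕ, 2 ≤ n →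
        |(n : ℝ) ^ 2 * ∏ k ∈ Finset.Icc 1 n, a k - L|
          ≤ C' * (Real.log n) ^ δ / Real.sqrt n) ∧
      Tendsto (fun n : ℕ => (n : ℝ) ^ 2 * ∏ k ∈ Finset.Icc 1 n, a k)
        atTop (nhds L) := by
  obtain ⟨C, hC, hCa⟩ := ha
  set K : ℝ := 4*C + 4 with hKdef
  have hK : 0 < K := by positivity
  set t : ℕ → ℝ := fun n => Real.log ((n:ℝ)^2 * ∏ k ∈ Finset.Icc 1 n, a k) with ht
  have hbpos : ∀ n : ℕ, 1 ≤ n → 0 < (n:ℝ)^2 * ∏ k ∈ Finset.Icc 1 n, a k := by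
    intro n hn
    have h0 : (0:ℝ) < (n:ℝ) := by exact_mod_cast hn
    have hP : 0 < ∏ k ∈ Finset.Icc 1 n, a k :=
      Finset.prod_pos (fun k hk => ha_pos k (Finset.mem_Icc.mp hk).1)
    positivity
  obtain ⟨n₀, hn₀⟩ := exists_nat_ge (2*K)
  obtain ⟨n₁, hn₁⟩ := exists_nat_ge (16*K^2)
  set N : ℕ := max (max n₀ n₁) 2 with hNdef
  have hN2 : 2 ≤ N := le_max_right _ _
  have hNK : 2*K ≤ (N:ℝ) := hn₀.trans (by exact_mod_cast le_trans (le_max_left _ _) (le_max_left _ _))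
  have hNK2 : 16*K^2 ≤ (N:ℝ) := hn₁.trans (by exact_mod_cast le_trans (le_max_right _ _) (le_max_left _ _))
  -- step bound
  have hstep : ∀ n : ℕ, N ≤ n → |t n - t (n-1)| ≤ 2*K/((n:ℝ)*Real.sqrt n) := by
    intro n hn
    have hn2 : 2 ≤ n := le_trans hN2 hn
    have hx2 : (2:ℝ) ≤ (n:ℝ) := by exact_mod_cast hn2
    have hsmall : K / ((n:ℝ)*Real.sqrt n) ≤ 1/2 := by
      have hN' : (N:ℝ) ≤ (n:ℝ) := by exact_mod_cast hn
      have h1 : (1:ℝ) ≤ Real.sqrt n := by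
        rw [Real.le_sqrt (by norm_num) (by linarith)]; nlinarith
      rw [div_le_iff₀ (by positivity)]
      nlinarith
    have hr := ratio_bound a C hC hCa ha_pos n hn2
    rw [← hKdef] at hr
    have hb1 := hbpos n (by omega)
    have hb2 := hbpos (n-1) (by omega)
    have hlogdiv : t n - t (n-1)
        = Real.log (((n:ℝ)^2 * ∏ k ∈ Finset.Icc 1 n, a k) /
          (((n-1:ℕ):ℝ)^2 * ∏ k ∈ Finset.Icc 1 (n-1), a k)) := by
      rw [ht]; exact (Real.log_div hb1.ne' hb2.ne').symm
    rw [hlogdiv]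
    have habs : |((n:ℝ)^2 * ∏ k ∈ Finset.Icc 1 n, a k) /
          (((n-1:ℕ):ℝ)^2 * ∏ k ∈ Finset.Icc 1 (n-1), a k) - 1| ≤ 1/2 :=
      hr.trans hsmall
    calc |Real.log _| ≤ 2 * |((n:ℝ)^2 * ∏ k ∈ Finset.Icc 1 n, a k) /
          (((n-1:ℕ):ℝ)^2 * ∏ k ∈ Finset.Icc 1 (n-1), a k) - 1| := log_bound habs
      _ ≤ 2 * (K/((n:ℝ)*Real.sqrt n)) := by linarith
      _ = 2*K/((n:ℝ)*Real.sqrt n) := by ring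
  -- telescoping
  have ht_tel : ∀ n : ℕ, N ≤ n → ∀ m : ℕ, n ≤ m →
      |t m - t n| ≤ 2*K*(2/Real.sqrt n - 2/Real.sqrt m) := by
    intro n hn m hm
    induction m, hm using Nat.le_induction with
    | base => simp
    | succ m hm ih =>
      have hm1 : 1 ≤ m := le_trans (by omega) hm
      have hstep' := hstep (m+1) (by omega)
      have hkey := key_sqrt m hm1
      have hcast : ((m+1:ℕ):ℝ) = (m:ℝ)+1 := by push_cast; ring
      rw [hcast] at hstep'
      have hmm : m + 1 - 1 = m := by omega
      rw [hmm] at hstep'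
      have htri : |t (m+1) - t n| ≤ |t (m+1) - t m| + |t m - t n| := by
        have := abs_add_le (t (m+1) - t m) (t m - t n)
        simpa using this
      have h2K : (0:ℝ) ≤ 2*K := by positivity
      have hkey' := mul_le_mul_of_nonneg_left hkey h2K
      rw [show ((m+1:ℕ):ℝ) = (m:ℝ)+1 from hcast]
      calc |t (m+1) - t n| ≤ |t (m+1) - t m| + |t m - t n| := htri
        _ ≤ 2*K/(((m:ℝ)+1)*Real.sqrt ((m:ℝ)+1)) + 2*K*(2/Real.sqrt n - 2/Real.sqrt m) := by
            push_cast
            exact add_le_add hstep' ih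
        _ ≤ 2*K*(2/Real.sqrt n - 2/Real.sqrt ((m:ℝ)+1)) := by
            rw [mul_one_div] at hkey'
            have hexp : 2*K*(2/Real.sqrt ((m:ℝ)) - 2/Real.sqrt ((m:ℝ)+1))
                = 2*K*(2/Real.sqrt ((m:ℝ)) ) - 2*K*(2/Real.sqrt ((m:ℝ)+1)) := by ring
            have hexp2 : 2*K*(2/Real.sqrt (n:ℝ) - 2/Real.sqrt ((m:ℝ)+1))
                = 2*K*(2/Real.sqrt (n:ℝ)) - 2*K*(2/Real.sqrt ((m:ℝ)+1)) := by ring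
            have hexp3 : 2*K*(2/Real.sqrt (n:ℝ) - 2/Real.sqrt (m:ℝ))
                = 2*K*(2/Real.sqrt (n:ℝ)) - 2*K*(2/Real.sqrt (m:ℝ)) := by ring
            rw [hexp] at hkey'
            rw [hexp2, hexp3]
            linarith
  -- uniform tail bound
  have ht_bound : ∀ n : ℕ, N ≤ n → ∀ m : ℕ, n ≤ m →
      |t m - t n| ≤ 4*K/Real.sqrt n := by
    intro n hn m hm
    have h1 := ht_tel n hn m hm
    have h2 : (0:ℝ) ≤ 2/Real.sqrt m := by positivity
    have h3 : 2*K*(2/Real.sqrt n - 2/Real.sqrt m) ≤ 2*K*(2/Real.sqrt n) := by nlinarith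
    calc |t m - t n| ≤ 2*K*(2/Real.sqrt n - 2/Real.sqrt m) := h1
      _ ≤ 2*K*(2/Real.sqrt n) := h3
      _ = 4*K/Real.sqrt n := by ring
  -- Cauchy sequence, limit
  have hsqrt_mono : ∀ p q : ℕ, p ≤ q → Real.sqrt p ≤ Real.sqrt q := by
    intro p q h
    exact Real.sqrt_le_sqrt (by exact_mod_cast h)
  have hcauchy : CauchySeq (fun j : ℕ => t (j + N)) := by
    apply cauchySeq_of_le_tendsto_0 (fun j : ℕ => 4*K/Real.sqrt ((j+N:ℕ):ℝ))
    · intro p q j hp hq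
      have key : ∀ p q : ℕ, p ≤ q → j ≤ p →
          dist (t (p + N)) (t (q + N)) ≤ 4*K/Real.sqrt ((j+N:ℕ):ℝ) := by
        intro p q hpq hjp
        rw [Real.dist_eq, abs_sub_comm]
        have h1 := ht_bound (p+N) (by omega) (q+N) (by omega)
        refine h1.trans ?_
        have hs1 : (0:ℝ) < Real.sqrt ((j+N:ℕ):ℝ) := Real.sqrt_pos.mpr (by positivity)
        gcongr
      rcases le_total p q with h | h
      · exact key p q h hp
      · rw [dist_comm]; exact key q p h hq
    · have hs : Tendsto (fun j : ℕ => Real.sqrt ((j+N:ℕ):ℝ)) atTop atTop := by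
        have h1 : Tendsto (fun j : ℕ => ((j+N:ℕ):ℝ)) atTop atTop := by
          apply tendsto_natCast_atTop_atTop.comp (tendsto_add_atTop_nat N)
        have h2 : Tendsto (fun x : ℝ => x ^ ((1:ℝ)/2)) atTop atTop :=
          tendsto_rpow_atTop (by norm_num)
        have h3 := h2.comp h1
        refine h3.congr (fun j => ?_)
        simp [Function.comp, Real.sqrt_eq_rpow]
      exact Tendsto.div_atTop tendsto_const_nhds hs
  obtain ⟨l, hl⟩ := cauchySeq_tendsto_of_complete hcauchy
  have ht_lim : Tendsto t atTop (nhds l) := (tendsto_add_atTop_iff_nat N).mp hl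
  -- distance of t n to the limit
  have htl : ∀ n : ℕ, N ≤ n → |t n - l| ≤ 4*K/Real.sqrt n := by
    intro n hn
    have h1 : Tendsto (fun m => |t m - t n|) atTop (nhds |l - t n|) :=
      ((ht_lim.sub_const (t n)).abs)
    have h2 : |l - t n| ≤ 4*K/Real.sqrt n :=
      le_of_tendsto h1 (eventually_atTop.mpr ⟨n, fun m hm => ht_bound n hn m hm⟩)
    rwa [abs_sub_comm]
  -- exponentials
  have hexp_bound : ∀ n : ℕ, N ≤ n →
      |(n:ℝ)^2 * ∏ k ∈ Finset.Icc 1 n, a k - Real.exp l|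
        ≤ 8*K*Real.exp l/Real.sqrt n := by
    intro n hn
    have hb := hbpos n (by omega)
    have hn0' : (0:ℝ) < (n:ℝ) := by exact_mod_cast (by omega : 0 < n)
    have hsn : (0:ℝ) < Real.sqrt n := Real.sqrt_pos.mpr hn0'
    have hN' : (N:ℝ) ≤ (n:ℝ) := by exact_mod_cast hn
    have h4K : 4*K ≤ Real.sqrt n := by
      rw [Real.le_sqrt (by positivity) (by positivity)]
      nlinarith
    have hd : |t n - l| ≤ 4*K/Real.sqrt n := htl n hn
    have hd1 : |t n - l| ≤ 1 := by
      refine hd.trans ?_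
      rw [div_le_one hsn]; exact h4K
    have he : (n:ℝ)^2 * ∏ k ∈ Finset.Icc 1 n, a k = Real.exp (t n) := by
      rw [ht]; exact (Real.exp_log hb).symm
    rw [he]
    have hsplit : Real.exp (t n) - Real.exp l = Real.exp l * (Real.exp (t n - l) - 1) := by
      rw [mul_sub, mul_one, ← Real.exp_add]; ring_nf
    rw [hsplit, abs_mul, Real.abs_exp]
    have h2 : |Real.exp (t n - l) - 1| ≤ 2 * |t n - l| := Real.abs_exp_sub_one_le hd1
    calc Real.exp l * |Real.exp (t n - l) - 1| ≤ Real.exp l * (2 * (4*K/Real.sqrt n)) := by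
          have : |Real.exp (t n - l) - 1| ≤ 2 * (4*K/Real.sqrt n) := by
            refine h2.trans ?_
            nlinarith
          exact mul_le_mul_of_nonneg_left this (Real.exp_pos l).le
      _ = 8*K*Real.exp l/Real.sqrt n := by ring
  -- global bound constant
  have hNe : (Finset.Icc 2 N).Nonempty := ⟨2, Finset.mem_Icc.mpr ⟨le_refl 2, hN2⟩⟩
  set M : ℝ := (Finset.Icc 2 N).sup' hNe
    (fun n => |(n:ℝ)^2 * ∏ k ∈ Finset.Icc 1 n, a k - Real.exp l| * Real.sqrt n) with hM
  set A : ℝ := max 1 (max M (8*K*Real.exp l)) with hA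
  have hA1 : (0:ℝ) < A := lt_of_lt_of_le one_pos (le_max_left _ _)
  have hfin : ∀ n : ℕ, 2 ≤ n →
      |(n:ℝ)^2 * ∏ k ∈ Finset.Icc 1 n, a k - Real.exp l| ≤ A / Real.sqrt n := by
    intro n hn
    have hn0 : (0:ℝ) < (n:ℝ) := by exact_mod_cast (by omega : 0 < n)
    have hsn : (0:ℝ) < Real.sqrt n := Real.sqrt_pos.mpr hn0
    rcases le_or_gt n N with h | h
    · have hmem : n ∈ Finset.Icc 2 N := Finset.mem_Icc.mpr ⟨hn, h⟩
      have hle : |(n:ℝ)^2 * ∏ k ∈ Finset.Icc 1 n, a k - Real.exp l| * Real.sqrt n ≤ M :=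
        Finset.le_sup'
          (fun n : ℕ => |(n:ℝ)^2 * ∏ k ∈ Finset.Icc 1 n, a k - Real.exp l| * Real.sqrt n) hmem
      rw [le_div_iff₀ hsn]
      exact hle.trans ((le_max_left _ _).trans (le_max_right _ _))
    · have h1 := hexp_bound n (le_of_lt h)
      refine h1.trans ?_
      have : 8*K*Real.exp l ≤ A := (le_max_right _ _).trans (le_max_right _ _)
      gcongr
  refine ⟨Real.exp l, Real.exp_pos l, ?_, ?_⟩
  · intro δ hδ
    have hlog2 : (0:ℝ) < Real.log 2 := Real.log_pos (by norm_num)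
    have hl2 : (0:ℝ) < Real.log 2 ^ δ := Real.rpow_pos_of_pos hlog2 δ
    refine ⟨A / Real.log 2 ^ δ, div_pos hA1 hl2, ?_⟩
    intro n hn
    have hn0 : (0:ℝ) < (n:ℝ) := by exact_mod_cast (by omega : 0 < n)
    have hsn : (0:ℝ) < Real.sqrt n := Real.sqrt_pos.mpr hn0
    refine (hfin n hn).trans ?_
    have hlogmono : Real.log 2 ^ δ ≤ Real.log n ^ δ := by
      apply Real.rpow_le_rpow hlog2.le _ (by linarith)
      exact Real.log_le_log (by norm_num) (by exact_mod_cast hn)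
    have hA_le : A ≤ A / Real.log 2 ^ δ * Real.log n ^ δ := by
      rw [div_mul_eq_mul_div, le_div_iff₀ hl2]
      exact mul_le_mul_of_nonneg_left hlogmono hA1.le
    gcongr
  · have h1 : Tendsto (fun n => Real.exp (t n)) atTop (nhds (Real.exp l)) :=
      (Real.continuous_exp.tendsto l).comp ht_lim
    refine h1.congr' ?_
    filter_upwards [eventually_ge_atTop 1] with n hn
    rw [ht]
    exact Real.exp_log (hbpos n hn)
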